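/- Let 𝒦 be a finite set and 𝒯, 𝒵 countable sets, and let η, α ∈ [0,1). Let P be a pmf on 𝒦×𝒦×𝒦×𝒯×𝒵 with coordinates (K, Kx, Ky, F, Z) such that Pr_P[K = Kx = Ky] ≥ 1 − η and d(P_{KFZ}, P_unif × P_{FZ}) ≤ α. Then for every ε, δ ∈ (0,1) with ε ≥ η and ε + δ ≥ α + η, there exists a pmf Q on 𝒦×𝒦×𝒦×𝒯×𝒵 with coordinates (K″, Kx, Ky, F, Z) whose marginal on (Kx, Ky, F, Z) equals that of P, such that Pr_Q[K″ = Kx = Ky] ≥ 1 − ε and d(Q_{K″FZ}, P_unif × P_{FZ}) ≤ δ. (Hybrid protocol: an (η,α)-secret key yields an (ε,δ)-secret key of the same length.) -/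

import Mathlib

open scoped BigOperators

noncomputable section

attribute [local instance] Classical.propDecidable

/-- Probability of a set under a pmf. -/
def probOf {α : Type*} (P : α → ℝ) (S : Set α) : ℝ := ∑' a : S, P a

/-- `P` is a probability mass function. -/
def IsPMF {α : Type*} (P : α → ℝ) : Prop := (∀ a, 0 ≤ P a) ∧ ∑' a, P a = 1

/-- Variational distance between two pmfs. -/
def tvDist {α : Type*} (P Q : α → ℝ) : ℝ := (1 / 2) * ∑' a, |P a - Q a|

namespace HybridAux

lemma max_sub_max (x : ℝ) : max x 0 - max (-x) 0 = x := by
  rcases le_total x 0 with h | h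
  · rw [max_eq_right h, max_eq_left (neg_nonneg.mpr h)]; ring
  · rw [max_eq_left h, max_eq_right (neg_nonpos.mpr h)]; ring

lemma max_eq_half (x : ℝ) : max x 0 = (|x| + x) / 2 := by
  rcases le_total x 0 with h | h
  · rw [max_eq_right h, abs_of_nonpos h]; ring
  · rw [max_eq_left h, abs_of_nonneg h]; ring

variable {K T Z : Type*} [Fintype K]

section Defs

variable (P : K × K × K × T × Z → ℝ) (t : ℝ)

def A (k : K) (f : T) (z : Z) : ℝ := ∑ kx, ∑ ky, P (k, kx, ky, f, z)

def PFZ (f : T) (z : Z) : ℝ := ∑ k, A P k f z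

def U (f : T) (z : Z) : ℝ := (Fintype.card K : ℝ)⁻¹ * PFZ P f z

def exc (k : K) (f : T) (z : Z) : ℝ := t * max (A P k f z - U P f z) 0

def defc (k : K) (f : T) (z : Z) : ℝ := t * max (U P f z - A P k f z) 0

def eF (k : K) (f : T) (z : Z) : ℝ := exc P t k f z / A P k f z

def DD (f : T) (z : Z) : ℝ := ∑ k, exc P t k f z

def SS (kx ky : K) (f : T) (z : Z) : ℝ := ∑ k, P (k, kx, ky, f, z) * eF P t k f z

def Qd (w : K × K × K × T × Z) : ℝ :=
  P w * (1 - eF P t w.1 w.2.2.2.1 w.2.2.2.2) +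
    defc P t w.1 w.2.2.2.1 w.2.2.2.2 * SS P t w.2.1 w.2.2.1 w.2.2.2.1 w.2.2.2.2
      / DD P t w.2.2.2.1 w.2.2.2.2

end Defs

lemma summable5_of (F : K × K × K × T × Z → ℝ) (hnn : ∀ w, 0 ≤ F w)
    (h : ∀ k kx ky : K, Summable fun p : T × Z => F (k, kx, ky, p.1, p.2)) :
    Summable F := by
  refine (summable_prod_of_nonneg (fun w => hnn w)).mpr ⟨fun k => ?_, Summable.of_finite⟩
  refine (summable_prod_of_nonneg (fun v => hnn _)).mpr ⟨fun kx => ?_, Summable.of_finite⟩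
  exact (summable_prod_of_nonneg (fun v => hnn _)).mpr ⟨fun ky => h k kx ky, Summable.of_finite⟩

lemma tsum5 (F : K × K × K × T × Z → ℝ) (hF : Summable F) :
    ∑' w, F w = ∑ k : K, ∑ kx : K, ∑ ky : K, ∑' p : T × Z, F (k, kx, ky, p.1, p.2) := by
  have h1 : ∀ k : K, Summable fun v : K × K × T × Z => F (k, v) :=
    fun k => hF.comp_injective (Prod.mk_right_injective k)
  have h2 : ∀ k kx : K, Summable fun v : K × T × Z => F (k, kx, v) :=
    fun k kx => (h1 k).comp_injective (Prod.mk_right_injective kx)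
  have h3 : ∀ k kx ky : K, Summable fun p : T × Z => F (k, kx, ky, p) :=
    fun k kx ky => (h2 k kx).comp_injective (Prod.mk_right_injective ky)
  rw [Summable.tsum_prod' hF h1, tsum_fintype]
  refine Finset.sum_congr rfl fun k _ => ?_
  rw [Summable.tsum_prod' (h1 k) (h2 k), tsum_fintype]
  refine Finset.sum_congr rfl fun kx _ => ?_
  rw [Summable.tsum_prod' (h2 k kx) (h3 k kx), tsum_fintype]

lemma tsum5' (F : K × K × K × T × Z → ℝ) (hF : Summable F) :
    ∑' w, F w = ∑' p : T × Z, ∑ k : K, ∑ kx : K, ∑ ky : K, F (k, kx, ky, p.1, p.2) := by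
  have h3 : ∀ k kx ky : K, Summable fun p : T × Z => F (k, kx, ky, p.1, p.2) :=
    fun k kx ky =>
      ((hF.comp_injective (Prod.mk_right_injective k)).comp_injective
        (Prod.mk_right_injective kx)).comp_injective (Prod.mk_right_injective ky)
  rw [tsum5 F hF]
  rw [Summable.tsum_finsetSum (f := fun k (p : T × Z) => ∑ kx, ∑ ky, F (k, kx, ky, p.1, p.2))
    (fun k _ => summable_sum fun kx _ => summable_sum fun ky _ => h3 k kx ky)]
  refine Finset.sum_congr rfl fun k _ => ?_
  rw [Summable.tsum_finsetSum (fun kx _ => summable_sum fun ky _ => h3 k kx ky)]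
  refine Finset.sum_congr rfl fun kx _ => ?_
  rw [Summable.tsum_finsetSum (fun ky _ => h3 k kx ky)]

variable {P : K × K × K × T × Z → ℝ} {t : ℝ}
variable (hP0 : ∀ w, 0 ≤ P w) (ht0 : 0 ≤ t) (ht1 : t ≤ 1)

section Nonneg

include hP0

lemma A_nonneg (k : K) (f : T) (z : Z) : 0 ≤ A P k f z :=
  Finset.sum_nonneg fun _ _ => Finset.sum_nonneg fun _ _ => hP0 _

lemma PFZ_nonneg (f : T) (z : Z) : 0 ≤ PFZ P f z :=
  Finset.sum_nonneg fun k _ => A_nonneg hP0 k f z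

lemma U_nonneg (f : T) (z : Z) : 0 ≤ U P f z :=
  mul_nonneg (by positivity) (PFZ_nonneg hP0 f z)

include ht0

lemma exc_nonneg (k : K) (f : T) (z : Z) : 0 ≤ exc P t k f z :=
  mul_nonneg ht0 (le_max_right _ _)

lemma defc_nonneg (k : K) (f : T) (z : Z) : 0 ≤ defc P t k f z :=
  mul_nonneg ht0 (le_max_right _ _)

lemma eF_nonneg (k : K) (f : T) (z : Z) : 0 ≤ eF P t k f z :=
  div_nonneg (exc_nonneg hP0 ht0 k f z) (A_nonneg hP0 k f z)

lemma DD_nonneg (f : T) (z : Z) : 0 ≤ DD P t f z :=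
  Finset.sum_nonneg fun k _ => exc_nonneg hP0 ht0 k f z

lemma SS_nonneg (kx ky : K) (f : T) (z : Z) : 0 ≤ SS P t kx ky f z :=
  Finset.sum_nonneg fun k _ => mul_nonneg (hP0 _) (eF_nonneg hP0 ht0 k f z)

include ht1

lemma exc_le_A (k : K) (f : T) (z : Z) : exc P t k f z ≤ A P k f z := by
  have h1 : max (A P k f z - U P f z) 0 ≤ A P k f z :=
    max_le (by linarith [U_nonneg hP0 f z]) (A_nonneg hP0 k f z)
  have h2 : t * max (A P k f z - U P f z) 0 ≤ 1 * max (A P k f z - U P f z) 0 :=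
    mul_le_mul_of_nonneg_right ht1 (le_max_right _ _)
  calc exc P t k f z ≤ 1 * max (A P k f z - U P f z) 0 := h2
    _ = max (A P k f z - U P f z) 0 := one_mul _
    _ ≤ A P k f z := h1

lemma eF_le_one (k : K) (f : T) (z : Z) : eF P t k f z ≤ 1 := by
  by_cases hA : A P k f z = 0
  · simp [eF, hA]
  · exact (div_le_one (lt_of_le_of_ne (A_nonneg hP0 k f z) (Ne.symm hA))).mpr
      (exc_le_A hP0 ht0 ht1 k f z)

lemma exc_eq (k : K) (f : T) (z : Z) : eF P t k f z * A P k f z = exc P t k f z := by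
  by_cases hA : A P k f z = 0
  · have : A P k f z - U P f z ≤ 0 := by
      rw [hA]; linarith [U_nonneg hP0 f z]
    have h2 : (A P k f z - U P f z) ⊔ 0 = 0 := max_eq_right this
    rw [hA, mul_zero, exc, h2, mul_zero]
  · exact div_mul_cancel₀ _ hA

lemma Qd_nonneg (w : K × K × K × T × Z) : 0 ≤ Qd P t w := by
  refine add_nonneg (mul_nonneg (hP0 w) (by linarith [eF_le_one hP0 ht0 ht1 w.1 w.2.2.2.1 w.2.2.2.2]))
    (div_nonneg (mul_nonneg (defc_nonneg hP0 ht0 _ _ _) (SS_nonneg hP0 ht0 _ _ _ _))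
      (DD_nonneg hP0 ht0 _ _))

end Nonneg

lemma defc_sub_exc (k : K) (f : T) (z : Z) :
    defc P t k f z - exc P t k f z = t * (U P f z - A P k f z) := by
  have := max_sub_max (U P f z - A P k f z)
  rw [neg_sub] at this
  unfold defc exc
  rw [← mul_sub, this]

lemma sum_defc (hK : Nonempty K) (f : T) (z : Z) :
    ∑ k, defc P t k f z = DD P t f z := by
  have hcard : (Fintype.card K : ℝ) ≠ 0 := by
    exact_mod_cast Fintype.card_ne_zero
  have h1 : ∑ k : K, (U P f z - A P (k : K) f z) = 0 := by
    rw [Finset.sum_sub_distrib, Finset.sum_const, Finset.card_univ]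
    simp only [nsmul_eq_mul, U]
    rw [← mul_assoc, mul_inv_cancel₀ hcard, one_mul]
    simp [PFZ]
  have h2 : ∑ k, (defc P t k f z - exc P t k f z) = 0 := by
    rw [Finset.sum_congr rfl fun k _ => defc_sub_exc (P := P) (t := t) k f z,
      ← Finset.mul_sum, h1, mul_zero]
  rw [Finset.sum_sub_distrib] at h2
  unfold DD
  linarith

lemma sum_rot (G : K → K → K → ℝ) :
    ∑ a, ∑ b, ∑ c, G a b c = ∑ b, ∑ c, ∑ a, G a b c := by
  rw [Finset.sum_comm]
  exact Finset.sum_congr rfl fun b _ => Finset.sum_comm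

include hP0 ht0 ht1 in
lemma inner_A_mul (k : K) (f : T) (z : Z) :
    ∑ kx, ∑ ky, P (k, kx, ky, f, z) * eF P t k f z = exc P t k f z := by
  have h1 : ∀ kx : K, ∑ ky : K, P (k, kx, ky, f, z) * eF P t k f z
      = (∑ ky : K, P (k, kx, ky, f, z)) * eF P t k f z :=
    fun kx => (Finset.sum_mul _ _ _).symm
  rw [Finset.sum_congr rfl fun kx _ => h1 kx, ← Finset.sum_mul]
  show A P k f z * eF P t k f z = exc P t k f z
  rw [mul_comm]
  exact exc_eq hP0 ht0 ht1 k f z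

include hP0 ht0 ht1 in
lemma sum_SS (f : T) (z : Z) :
    ∑ kx, ∑ ky, SS P t kx ky f z = DD P t f z := by
  unfold SS
  rw [sum_rot (fun kx ky k => P (k, kx, ky, f, z) * eF P t k f z),
    sum_rot (fun ky k kx => P (k, kx, ky, f, z) * eF P t k f z)]
  exact Finset.sum_congr rfl fun k _ => inner_A_mul hP0 ht0 ht1 k f z

include hP0 ht0 ht1 in
lemma m_total (f : T) (z : Z) :
    ∑ k, ∑ kx, ∑ ky, P (k, kx, ky, f, z) * eF P t k f z = DD P t f z :=
  Finset.sum_congr rfl fun k _ => inner_A_mul hP0 ht0 ht1 k f z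

include hP0 ht0 ht1 in
lemma SS_le_DD (kx ky : K) (f : T) (z : Z) : SS P t kx ky f z ≤ DD P t f z := by
  rw [← sum_SS hP0 ht0 ht1 f z]
  calc SS P t kx ky f z ≤ ∑ ky' : K, SS P t kx ky' f z :=
        Finset.single_le_sum (fun i _ => SS_nonneg hP0 ht0 kx i f z) (Finset.mem_univ ky)
    _ ≤ ∑ kx' : K, ∑ ky' : K, SS P t kx' ky' f z :=
        Finset.single_le_sum
          (fun i _ => Finset.sum_nonneg fun j _ => SS_nonneg hP0 ht0 i j f z)
          (Finset.mem_univ kx)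

include hP0 ht0 ht1 in
lemma marginal_k (hK : Nonempty K) (kx ky : K) (f : T) (z : Z) :
    ∑ k, Qd P t (k, kx, ky, f, z) = ∑ k, P (k, kx, ky, f, z) := by
  unfold Qd
  rw [Finset.sum_add_distrib]
  have h1 : ∑ k, P (k, kx, ky, f, z) * (1 - eF P t k f z)
      = ∑ k, P (k, kx, ky, f, z) - SS P t kx ky f z := by
    unfold SS
    rw [← Finset.sum_sub_distrib]
    exact Finset.sum_congr rfl fun k _ => by ring
  have h2 : ∑ k, defc P t k f z * SS P t kx ky f z / DD P t f z
      = SS P t kx ky f z := by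
    have hrw : ∀ k : K, defc P t k f z * SS P t kx ky f z / DD P t f z
        = defc P t k f z * (SS P t kx ky f z / DD P t f z) :=
      fun k => mul_div_assoc _ _ _
    rw [Finset.sum_congr rfl fun k _ => hrw k, ← Finset.sum_mul, sum_defc hK f z]
    by_cases hDD : DD P t f z = 0
    · have hS0 : SS P t kx ky f z = 0 :=
        le_antisymm (hDD ▸ SS_le_DD hP0 ht0 ht1 kx ky f z) (SS_nonneg hP0 ht0 kx ky f z)
      rw [hS0, hDD]; simp
    · rw [mul_comm, div_mul_cancel₀ _ hDD]
  rw [h1, h2]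
  ring

include hP0 ht0 ht1 in
lemma marg_kfz (hK : Nonempty K) (k : K) (f : T) (z : Z) :
    ∑ kx, ∑ ky, Qd P t (k, kx, ky, f, z)
      = A P k f z - exc P t k f z + defc P t k f z := by
  unfold Qd
  have hsplit : ∀ kx : K, ∑ ky : K, (P (k, kx, ky, f, z) * (1 - eF P t k f z)
        + defc P t k f z * SS P t kx ky f z / DD P t f z)
      = ∑ ky : K, P (k, kx, ky, f, z) * (1 - eF P t k f z)
        + ∑ ky : K, defc P t k f z * SS P t kx ky f z / DD P t f z :=
    fun kx => Finset.sum_add_distrib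
  rw [Finset.sum_congr rfl fun kx _ => hsplit kx, Finset.sum_add_distrib]
  have h1 : ∑ kx, ∑ ky, P (k, kx, ky, f, z) * (1 - eF P t k f z)
      = A P k f z - exc P t k f z := by
    have hx : ∀ kx : K, ∑ ky : K, P (k, kx, ky, f, z) * (1 - eF P t k f z)
        = (∑ ky : K, P (k, kx, ky, f, z)) * (1 - eF P t k f z) :=
      fun kx => (Finset.sum_mul _ _ _).symm
    rw [Finset.sum_congr rfl fun kx _ => hx kx, ← Finset.sum_mul]
    show A P k f z * (1 - eF P t k f z) = A P k f z - exc P t k f z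
    rw [mul_sub, mul_one, mul_comm, exc_eq hP0 ht0 ht1 k f z]
  have h2 : ∑ kx, ∑ ky, defc P t k f z * SS P t kx ky f z / DD P t f z
      = defc P t k f z := by
    have hrw : ∀ kx ky : K, defc P t k f z * SS P t kx ky f z / DD P t f z
        = (defc P t k f z / DD P t f z) * SS P t kx ky f z := fun kx ky => by ring
    rw [Finset.sum_congr rfl fun kx _ => Finset.sum_congr rfl fun ky _ => hrw kx ky]
    have hfac : ∀ kx : K, ∑ ky : K, (defc P t k f z / DD P t f z) * SS P t kx ky f z
        = (defc P t k f z / DD P t f z) * ∑ ky : K, SS P t kx ky f z :=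
      fun kx => (Finset.mul_sum _ _ _).symm
    rw [Finset.sum_congr rfl fun kx _ => hfac kx, ← Finset.mul_sum, sum_SS hP0 ht0 ht1 f z]
    by_cases hDD : DD P t f z = 0
    · have hd0 : defc P t k f z = 0 := by
        have hsum := sum_defc (P := P) (t := t) hK f z
        exact (Finset.sum_eq_zero_iff_of_nonneg
          (fun i _ => defc_nonneg hP0 ht0 i f z)).mp (by rw [hsum, hDD]) k (Finset.mem_univ k)
      rw [hd0, hDD]; simp
    · exact div_mul_cancel₀ _ hDD
  rw [h1, h2]

include hP0 ht0 ht1 in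
lemma qd_total (hK : Nonempty K) (f : T) (z : Z) :
    ∑ k, ∑ kx, ∑ ky, Qd P t (k, kx, ky, f, z) = PFZ P f z := by
  rw [sum_rot (fun k kx ky => Qd P t (k, kx, ky, f, z))]
  rw [Finset.sum_congr rfl fun kx _ => Finset.sum_congr rfl fun ky _ =>
    marginal_k hP0 ht0 ht1 hK kx ky f z]
  rw [sum_rot (fun kx ky k => P (k, kx, ky, f, z)),
    sum_rot (fun ky k kx => P (k, kx, ky, f, z))]
  rfl

end HybridAux

open HybridAux in
/-- hybrid protocol. Coordinates of `P` are `(K, Kx, Ky, F, Z)`;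
coordinates of `Q` are `(K'', Kx, Ky, F, Z)`. -/
theorem hybrid_protocol
    {K T Z : Type*} [Fintype K] [Countable T] [Countable Z]
    (η α : ℝ) (hη0 : 0 ≤ η) (hη1 : η < 1) (hα0 : 0 ≤ α) (hα1 : α < 1)
    (P : K × K × K × T × Z → ℝ) (hP : IsPMF P)
    (hrel : 1 - η ≤ probOf P {w | w.1 = w.2.1 ∧ w.2.1 = w.2.2.1})
    (hsec : tvDist
        (fun q : K × T × Z => ∑' (kx : K) (ky : K), P (q.1, kx, ky, q.2.1, q.2.2))
        (fun q : K × T × Z => (Fintype.card K : ℝ)⁻¹ *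
          ∑' (k : K) (kx : K) (ky : K), P (k, kx, ky, q.2.1, q.2.2)) ≤ α)
    (ε δ : ℝ) (hε0 : 0 < ε) (hε1 : ε < 1) (hδ0 : 0 < δ) (hδ1 : δ < 1)
    (hεη : η ≤ ε) (hsum : α + η ≤ ε + δ) :
    ∃ Q : K × K × K × T × Z → ℝ, IsPMF Q ∧
      -- the marginal of Q on (Kx, Ky, F, Z) equals that of P
      (∀ v : K × K × T × Z,
        (∑' k : K, Q (k, v.1, v.2.1, v.2.2.1, v.2.2.2))
          = ∑' k : K, P (k, v.1, v.2.1, v.2.2.1, v.2.2.2)) ∧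
      -- Pr_Q[K'' = Kx = Ky] ≥ 1 - ε
      1 - ε ≤ probOf Q {w | w.1 = w.2.1 ∧ w.2.1 = w.2.2.1} ∧
      -- d(Q_{K''FZ}, P_unif × P_{FZ}) ≤ δ
      tvDist
        (fun q : K × T × Z => ∑' (kx : K) (ky : K), Q (q.1, kx, ky, q.2.1, q.2.2))
        (fun q : K × T × Z => (Fintype.card K : ℝ)⁻¹ *
          ∑' (k : K) (kx : K) (ky : K), P (k, kx, ky, q.2.1, q.2.2)) ≤ δ := by
  classical
  obtain ⟨hP0, hP1⟩ := hP
  haveI hK : Nonempty K := by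
    by_contra h
    rw [not_nonempty_iff] at h
    rw [tsum_empty] at hP1
    norm_num at hP1
  have hPsum : Summable P := by
    by_contra h
    rw [tsum_eq_zero_of_not_summable h] at hP1
    norm_num at hP1
  have hinj : ∀ k kx ky : K,
      Function.Injective (fun p : T × Z => ((k, kx, ky, p.1, p.2) : K × K × K × T × Z)) := by
    intro k kx ky p q h
    simpa [Prod.ext_iff] using h
  have sumP5 : ∀ k kx ky : K, Summable fun p : T × Z => P (k, kx, ky, p.1, p.2) :=
    fun k kx ky => hPsum.comp_injective (hinj k kx ky)
  have sumA : ∀ k : K, Summable fun p : T × Z => HybridAux.A P k p.1 p.2 := by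
    intro k
    have h1 : (fun p : T × Z => HybridAux.A P k p.1 p.2)
        = fun p : T × Z => ∑ kx, ∑ ky, P (k, kx, ky, p.1, p.2) := rfl
    rw [h1]
    exact summable_sum fun kx _ => summable_sum fun ky _ => sumP5 k kx ky
  have sumPFZ : Summable fun p : T × Z => HybridAux.PFZ P p.1 p.2 := by
    have h1 : (fun p : T × Z => HybridAux.PFZ P p.1 p.2)
        = fun p : T × Z => ∑ k, HybridAux.A P k p.1 p.2 := rfl
    rw [h1]
    exact summable_sum fun k _ => sumA k
  have sumU : Summable fun p : T × Z => HybridAux.U P p.1 p.2 := sumPFZ.mul_left _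
  set Af : K × T × Z → ℝ := fun q => HybridAux.A P q.1 q.2.1 q.2.2 with hAf
  set Uf : K × T × Z → ℝ := fun q => HybridAux.U P q.2.1 q.2.2 with hUf
  have eA : (fun q : K × T × Z => ∑' (kx : K) (ky : K), P (q.1, kx, ky, q.2.1, q.2.2)) = Af := by
    funext q
    simp only [tsum_fintype]
    rfl
  have eU : (fun q : K × T × Z => (Fintype.card K : ℝ)⁻¹ *
      ∑' (k : K) (kx : K) (ky : K), P (k, kx, ky, q.2.1, q.2.2)) = Uf := by
    funext q
    simp only [tsum_fintype]
    rfl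
  rw [eA, eU] at hsec
  set α'' := tvDist Af Uf with hα''def
  have htvd : α'' = (1 / 2) * ∑' q, |Af q - Uf q| := rfl
  have hα''0 : 0 ≤ α'' := by
    rw [htvd]
    exact mul_nonneg (by norm_num) (tsum_nonneg fun _ => abs_nonneg _)
  have hεη' : (0 : ℝ) ≤ ε - η := by linarith
  obtain ⟨t, ht0, ht1, hta, hts⟩ :
      ∃ t : ℝ, 0 ≤ t ∧ t ≤ 1 ∧ t * α'' ≤ ε - η ∧ (1 - t) * α'' ≤ δ := by
    by_cases h : α'' ≤ ε - η
    · exact ⟨1, by norm_num, le_refl 1, by simpa using h, by simpa using hδ0.le⟩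
    · have hpos : 0 < α'' := lt_of_le_of_lt hεη' (not_le.mp h)
      refine ⟨(ε - η) / α'', div_nonneg hεη' hα''0, ?_, ?_, ?_⟩
      · exact (div_le_one hpos).mpr (not_le.mp h).le
      · rw [div_mul_cancel₀ _ (ne_of_gt hpos)]
      · have h1 : (1 - (ε - η) / α'') * α'' = α'' - (ε - η) := by
          field_simp
        rw [h1]
        linarith [hsec]
  have sumAf : Summable Af :=
    (summable_prod_of_nonneg (fun q => A_nonneg hP0 _ _ _)).mpr
      ⟨fun k => sumA k, Summable.of_finite⟩
  have sumUf : Summable Uf :=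
    (summable_prod_of_nonneg (fun q => U_nonneg hP0 _ _)).mpr
      ⟨fun _ => sumU, Summable.of_finite⟩
  have sumDiff : Summable fun q => Af q - Uf q := sumAf.sub sumUf
  have sumAbs : Summable fun q => |Af q - Uf q| := sumDiff.abs
  have sumMaxSl : ∀ k : K, Summable fun p : T × Z =>
      max (HybridAux.A P k p.1 p.2 - HybridAux.U P p.1 p.2) 0 :=
    fun k => Summable.of_nonneg_of_le (fun p => le_max_right _ _)
      (fun p => max_le (le_abs_self _) (abs_nonneg _)) ((sumA k).sub sumU).abs
  have sumMax : Summable fun q : K × T × Z => max (Af q - Uf q) 0 :=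
    (summable_prod_of_nonneg (fun q => le_max_right _ _)).mpr
      ⟨fun k => sumMaxSl k, Summable.of_finite⟩
  have hTot : ∑ k : K, ∑ kx : K, ∑ ky : K, ∑' p : T × Z, P (k, kx, ky, p.1, p.2) = 1 := by
    rw [← tsum5 P hPsum]
    exact hP1
  have hPFZ1 : ∑' p : T × Z, HybridAux.PFZ P p.1 p.2 = 1 := by
    have h1 : (fun p : T × Z => HybridAux.PFZ P p.1 p.2)
        = fun p : T × Z => ∑ k, ∑ kx, ∑ ky, P (k, kx, ky, p.1, p.2) := rfl
    rw [h1,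
      Summable.tsum_finsetSum (fun k _ => summable_sum fun kx _ => summable_sum fun ky _ => sumP5 k kx ky),
      ← hTot]
    refine Finset.sum_congr rfl fun k _ => ?_
    rw [Summable.tsum_finsetSum (fun kx _ => summable_sum fun ky _ => sumP5 k kx ky)]
    refine Finset.sum_congr rfl fun kx _ => ?_
    rw [Summable.tsum_finsetSum (fun ky _ => sumP5 k kx ky)]
  have hA1 : ∑' q : K × T × Z, Af q = 1 := by
    rw [Summable.tsum_prod' sumAf (fun k => sumA k), tsum_fintype, ← hTot]
    refine Finset.sum_congr rfl fun k _ => ?_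
    have h1 : (fun c : T × Z => Af (k, c))
        = fun c : T × Z => ∑ kx, ∑ ky, P (k, kx, ky, c.1, c.2) := rfl
    rw [h1, Summable.tsum_finsetSum (fun kx _ => summable_sum fun ky _ => sumP5 k kx ky)]
    refine Finset.sum_congr rfl fun kx _ => ?_
    rw [Summable.tsum_finsetSum (fun ky _ => sumP5 k kx ky)]
  have hU1 : ∑' q : K × T × Z, Uf q = 1 := by
    rw [Summable.tsum_prod' sumUf (fun _ => sumU), tsum_fintype]
    have h1 : ∀ k : K, ∑' c : T × Z, Uf (k, c) = (Fintype.card K : ℝ)⁻¹ * 1 := by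
      intro k
      have h2 : (fun c : T × Z => Uf (k, c))
          = fun c : T × Z => (Fintype.card K : ℝ)⁻¹ * HybridAux.PFZ P c.1 c.2 := rfl
      rw [h2, tsum_mul_left, hPFZ1]
    rw [Finset.sum_congr rfl fun k _ => h1 k, Finset.sum_const, Finset.card_univ,
      nsmul_eq_mul, mul_one]
    exact mul_inv_cancel₀ (by exact_mod_cast (Fintype.card_ne_zero : Fintype.card K ≠ 0))
  have htv : ∑' q, |Af q - Uf q| = 2 * α'' := by
    rw [htvd]
    ring
  have hmaxsum : ∑' q : K × T × Z, max (Af q - Uf q) 0 = α'' := by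
    rw [tsum_congr (fun q => HybridAux.max_eq_half (Af q - Uf q)), tsum_div_const,
      Summable.tsum_add sumAbs sumDiff, htv, Summable.tsum_sub sumAf sumUf, hA1, hU1]
    ring
  have hE : ∑' p : T × Z, HybridAux.DD P t p.1 p.2 = t * α'' := by
    have h1 : ∀ p : T × Z, HybridAux.DD P t p.1 p.2
        = t * ∑ k, max (HybridAux.A P k p.1 p.2 - HybridAux.U P p.1 p.2) 0 := by
      intro p
      unfold HybridAux.DD HybridAux.exc
      rw [Finset.mul_sum]
    have hswap : ∑' q : K × T × Z, max (Af q - Uf q) 0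
        = ∑' p : T × Z, ∑ k : K, max (HybridAux.A P k p.1 p.2 - HybridAux.U P p.1 p.2) 0 := by
      rw [Summable.tsum_prod' sumMax (fun k => sumMaxSl k)]
      rw [tsum_fintype (f := fun b : K => ∑' c : T × Z, max (Af (b, c) - Uf (b, c)) 0)]
      rw [Summable.tsum_finsetSum (fun k _ => sumMaxSl k)]
    rw [tsum_congr h1, tsum_mul_left, ← hmaxsum, hswap]
  set Q : K × K × K × T × Z → ℝ := HybridAux.Qd P t with hQdef
  have sumQ1 : Summable fun w : K × K × K × T × Z =>
      P w * (1 - HybridAux.eF P t w.1 w.2.2.2.1 w.2.2.2.2) := by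
    refine Summable.of_nonneg_of_le (fun w => ?_) (fun w => ?_) hPsum
    · exact mul_nonneg (hP0 w)
        (by linarith [eF_le_one hP0 ht0 ht1 (P := P) w.1 w.2.2.2.1 w.2.2.2.2])
    · exact mul_le_of_le_one_right (hP0 w)
        (by linarith [eF_nonneg hP0 ht0 (P := P) (t := t) w.1 w.2.2.2.1 w.2.2.2.2])
  have sumDefc5 : Summable fun w : K × K × K × T × Z =>
      HybridAux.defc P t w.1 w.2.2.2.1 w.2.2.2.2 := by
    refine summable5_of _ (fun w => defc_nonneg hP0 ht0 _ _ _) (fun k kx ky => ?_)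
    refine Summable.of_nonneg_of_le (fun p => defc_nonneg hP0 ht0 _ _ _)
      (fun p => ?_) (sumU.mul_left t)
    unfold HybridAux.defc
    refine mul_le_mul_of_nonneg_left ?_ ht0
    exact max_le (by linarith [A_nonneg hP0 k p.1 p.2]) (U_nonneg hP0 p.1 p.2)
  have sumQ2 : Summable fun w : K × K × K × T × Z =>
      HybridAux.defc P t w.1 w.2.2.2.1 w.2.2.2.2
        * HybridAux.SS P t w.2.1 w.2.2.1 w.2.2.2.1 w.2.2.2.2
        / HybridAux.DD P t w.2.2.2.1 w.2.2.2.2 := by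
    refine Summable.of_nonneg_of_le
      (fun w => div_nonneg (mul_nonneg (defc_nonneg hP0 ht0 _ _ _)
        (SS_nonneg hP0 ht0 _ _ _ _)) (DD_nonneg hP0 ht0 _ _))
      (fun w => ?_) sumDefc5
    rw [mul_div_assoc]
    refine mul_le_of_le_one_right (defc_nonneg hP0 ht0 _ _ _) ?_
    by_cases hDD : HybridAux.DD P t w.2.2.2.1 w.2.2.2.2 = 0
    · rw [hDD, div_zero]
      norm_num
    · exact (div_le_one (lt_of_le_of_ne (DD_nonneg hP0 ht0 _ _) (Ne.symm hDD))).mpr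
        (SS_le_DD hP0 ht0 ht1 _ _ _ _)
  have sumQ : Summable Q := by
    have h1 : Q = fun w : K × K × K × T × Z =>
        P w * (1 - HybridAux.eF P t w.1 w.2.2.2.1 w.2.2.2.2)
          + HybridAux.defc P t w.1 w.2.2.2.1 w.2.2.2.2
            * HybridAux.SS P t w.2.1 w.2.2.1 w.2.2.2.1 w.2.2.2.2
            / HybridAux.DD P t w.2.2.2.1 w.2.2.2.2 := rfl
    rw [h1]
    exact sumQ1.add sumQ2
  have hQ0 : ∀ w, 0 ≤ Q w := Qd_nonneg hP0 ht0 ht1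
  have hQtot : ∑' w, Q w = 1 := by
    rw [tsum5' Q sumQ,
      tsum_congr (fun p : T × Z => qd_total hP0 ht0 ht1 hK p.1 p.2)]
    exact hPFZ1
  refine ⟨Q, ⟨hQ0, hQtot⟩, ?_, ?_, ?_⟩
  · intro v
    rw [tsum_fintype, tsum_fintype]
    exact marginal_k hP0 ht0 ht1 hK v.1 v.2.1 v.2.2.1 v.2.2.2
  · -- reliability
    set S : Set (K × K × K × T × Z) := {w | w.1 = w.2.1 ∧ w.2.1 = w.2.2.1} with hS
    set M : K × K × K × T × Z → ℝ :=
      fun w => P w * HybridAux.eF P t w.1 w.2.2.2.1 w.2.2.2.2 with hM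
    have hM0 : ∀ w, 0 ≤ M w :=
      fun w => mul_nonneg (hP0 w) (eF_nonneg hP0 ht0 _ _ _)
    have sumM : Summable M :=
      Summable.of_nonneg_of_le hM0
        (fun w => mul_le_of_le_one_right (hP0 w) (eF_le_one hP0 ht0 ht1 _ _ _)) hPsum
    have hMtot : ∑' w, M w = t * α'' := by
      rw [tsum5' M sumM, ← hE]
      exact tsum_congr fun p => m_total hP0 ht0 ht1 p.1 p.2
    have hPQ : ∀ w, P w - Q w ≤ M w := by
      intro w
      have h2 : 0 ≤ HybridAux.defc P t w.1 w.2.2.2.1 w.2.2.2.2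
          * HybridAux.SS P t w.2.1 w.2.2.1 w.2.2.2.1 w.2.2.2.2
          / HybridAux.DD P t w.2.2.2.1 w.2.2.2.2 :=
        div_nonneg (mul_nonneg (defc_nonneg hP0 ht0 _ _ _)
          (SS_nonneg hP0 ht0 _ _ _ _)) (DD_nonneg hP0 ht0 _ _)
      have h3 : Q w = P w * (1 - HybridAux.eF P t w.1 w.2.2.2.1 w.2.2.2.2)
          + HybridAux.defc P t w.1 w.2.2.2.1 w.2.2.2.2
            * HybridAux.SS P t w.2.1 w.2.2.1 w.2.2.2.1 w.2.2.2.2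
            / HybridAux.DD P t w.2.2.2.1 w.2.2.2.2 := rfl
      have h4 : M w = P w * HybridAux.eF P t w.1 w.2.2.2.1 w.2.2.2.2 := rfl
      rw [h3, h4]
      nlinarith [hP0 w]
    have hsP : Summable fun a : S => P (a : K × K × K × T × Z) := hPsum.subtype S
    have hsQ : Summable fun a : S => Q (a : K × K × K × T × Z) := sumQ.subtype S
    have hsM : Summable fun a : S => M (a : K × K × K × T × Z) := sumM.subtype S
    have step1 : probOf P S - probOf Q S ≤ ∑' a : S, M a := by
      rw [probOf, probOf, ← Summable.tsum_sub hsP hsQ]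
      exact Summable.tsum_le_tsum (fun a => hPQ a) (hsP.sub hsQ) hsM
    have step2 : ∑' a : S, M a ≤ ∑' w, M w := by
      rw [tsum_subtype]
      exact Summable.tsum_le_tsum
        (fun w => Set.indicator_le_self' (fun w _ => hM0 w) w)
        (sumM.indicator S) sumM
    have : probOf P S - probOf Q S ≤ t * α'' := by
      calc probOf P S - probOf Q S ≤ ∑' a : S, M a := step1
        _ ≤ ∑' w, M w := step2
        _ = t * α'' := hMtot
    linarith [hrel]
  · -- secrecy
    have eQ : (fun q : K × T × Z => ∑' (kx : K) (ky : K), Q (q.1, kx, ky, q.2.1, q.2.2))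
        = fun q : K × T × Z => Af q - HybridAux.exc P t q.1 q.2.1 q.2.2
            + HybridAux.defc P t q.1 q.2.1 q.2.2 := by
      funext q
      simp only [tsum_fintype]
      exact marg_kfz hP0 ht0 ht1 hK q.1 q.2.1 q.2.2
    rw [eQ, eU]
    have hpt : ∀ q : K × T × Z,
        |(Af q - HybridAux.exc P t q.1 q.2.1 q.2.2
          + HybridAux.defc P t q.1 q.2.1 q.2.2) - Uf q| = (1 - t) * |Af q - Uf q| := by
      intro q
      have hde := HybridAux.defc_sub_exc (P := P) (t := t) q.1 q.2.1 q.2.2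
      have h1 : (Af q - HybridAux.exc P t q.1 q.2.1 q.2.2
          + HybridAux.defc P t q.1 q.2.1 q.2.2) - Uf q = (1 - t) * (Af q - Uf q) := by
        have hAq : Af q = HybridAux.A P q.1 q.2.1 q.2.2 := rfl
        have hUq : Uf q = HybridAux.U P q.2.1 q.2.2 := rfl
        rw [hAq, hUq]
        linear_combination hde
      rw [h1, abs_mul, abs_of_nonneg (by linarith : (0 : ℝ) ≤ 1 - t)]
    have hcalc : tvDist (fun q : K × T × Z => Af q - HybridAux.exc P t q.1 q.2.1 q.2.2
        + HybridAux.defc P t q.1 q.2.1 q.2.2) Uf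
        = (1 - t) * α'' := by
      have h0 : tvDist (fun q : K × T × Z => Af q - HybridAux.exc P t q.1 q.2.1 q.2.2
          + HybridAux.defc P t q.1 q.2.1 q.2.2) Uf
          = (1 / 2) * ∑' q : K × T × Z, |(Af q - HybridAux.exc P t q.1 q.2.1 q.2.2
            + HybridAux.defc P t q.1 q.2.1 q.2.2) - Uf q| := rfl
      rw [h0, tsum_congr hpt, tsum_mul_left, htv]
      ring
    rw [hcalc]
    exact hts
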